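/- For words u < w in subword order, μ(u,w) = (−1)^{|w|−|u|} · E(u,w) + Σ_{λ : u ≤ λ < w} μ(u,λ) · μ(0̂,1̂), where the second factor in each summand is the Möbius function of the bounded poset Â*(λ,w), and the sum is over all words λ with u ≤ λ ≤ w and λ ≠ w. -/

import Mathlib

attribute [local instance] Classical.propDecidable

noncomputable instance {α : Type*} [Fintype α] : Fintype (WithBot α) :=
  inferInstanceAs (Fintype (Option α))
noncomputable instance {α : Type*} [Fintype α] : Fintype (WithTop α) :=
  inferInstanceAs (Fintype (Option α))

/-- The Möbius function of a finite partial order. -/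
noncomputable def mob {α : Type*} [Preorder α] [Fintype α] (a b : α) : ℤ :=
  letI := Classical.decEq α
  letI : @DecidableRel α α (· ≤ ·) := Classical.decRel _
  letI : @DecidableRel α α (· < ·) := Classical.decRel _
  letI : LocallyFiniteOrder α := Fintype.toLocallyFiniteOrder
  IncidenceAlgebra.mu ℤ a b

/-- The bounded poset obtained by adjoining a new minimum `0̂` and maximum `1̂`. -/
abbrev Bd (α : Type*) := WithBot (WithTop α)

/-- The Möbius number `μ(0̂,1̂)` of the bounded poset obtained from a finite poset by
adjoining a new minimum and maximum. -/
noncomputable def mobHat (α : Type*) [Preorder α] [Fintype α] : ℤ :=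
  mob (⊥ : Bd α) ⊤

/-- The subsequence of the word `w` indexed by the set of positions `S`,
taken in increasing position order. -/
def subIdx {A : Type*} (w : List A) (S : Finset (Fin w.length)) : List A :=
  (S.sort (· ≤ ·)).map (w.get ·)

/-- `E u w`: the number of embeddings of `u` in `w`, i.e. of sets of positions of `w`
whose indexed subsequence is `u`. -/
noncomputable def wordE {A : Type*} (u w : List A) : ℕ :=
  (Finset.univ.filter fun S : Finset (Fin w.length) => subIdx w S = u).card

/-- The poset `A*(λ,w)`: all proper subsets `S ⊊ {1,…,|w|}` of positions such that `λ`
is a subsequence of the word `w|_S`, ordered by inclusion. -/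
abbrev AstarW {A : Type*} (w lam : List A) :=
  {S : Finset (Fin w.length) // S ≠ Finset.univ ∧ lam.Sublist (subIdx w S)}

open Finset

/-! ### basic mob lemmas -/

lemma mob_self {α : Type*} [PartialOrder α] [Fintype α] (a : α) : mob a a = 1 := by
  unfold mob
  letI := Classical.decEq α
  letI : @DecidableRel α α (· ≤ ·) := Classical.decRel _
  letI : @DecidableRel α α (· < ·) := Classical.decRel _
  letI : LocallyFiniteOrder α := Fintype.toLocallyFiniteOrder
  exact IncidenceAlgebra.mu_self a

lemma mob_sum_left {α : Type*} [PartialOrder α] [Fintype α] {a b : α} (hne : a ≠ b) :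
    ∑ x ∈ Finset.univ.filter (fun x => a ≤ x ∧ x ≤ b), mob x b = 0 := by
  unfold mob
  letI := Classical.decEq α
  letI : @DecidableRel α α (· ≤ ·) := Classical.decRel _
  letI : @DecidableRel α α (· < ·) := Classical.decRel _
  letI : LocallyFiniteOrder α := Fintype.toLocallyFiniteOrder
  have h := IncidenceAlgebra.sum_Icc_mu_left (𝕜 := ℤ) a b
  rw [if_neg hne] at h
  rw [← h]
  apply Finset.sum_congr _ (fun _ _ => rfl)
  ext x
  simp [Finset.mem_Icc]

/-! ### list lemmas -/

lemma sorted_map_get_sublist {A : Type*} {w : List A} (is : List (Fin w.length))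
    (h : is.Pairwise (· < ·)) : (is.map (w.get ·)).Sublist w := by
  rw [List.sublist_iff_exists_fin_orderEmbedding_get_eq]
  have hlen : (is.map (w.get ·)).length = is.length := List.length_map _
  have hmono : StrictMono fun i : Fin (is.map (w.get ·)).length => is.get (Fin.cast hlen i) := by
    intro i j hij
    exact (List.pairwise_iff_get.1 h) _ _ (by simpa using hij)
  refine ⟨OrderEmbedding.ofStrictMono _ hmono, fun ix => ?_⟩
  simp [List.getElem_map]

lemma subIdx_sublist {A : Type*} (w : List A) (S : Finset (Fin w.length)) :
    (subIdx w S).Sublist w :=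
  sorted_map_get_sublist _ (S.sortedLT_sort.pairwise)

lemma subIdx_length {A : Type*} (w : List A) (S : Finset (Fin w.length)) :
    (subIdx w S).length = S.card := by
  simp [subIdx]

lemma subIdx_mono {A : Type*} (w : List A) {S T : Finset (Fin w.length)} (h : S ⊆ T) :
    (subIdx w S).Sublist (subIdx w T) := by
  apply List.Sublist.map
  refine List.sublist_of_subperm_of_pairwise ?_ (S.pairwise_sort _) (T.pairwise_sort _)
  refine List.Nodup.subperm (S.sort_nodup _) ?_
  intro x hx
  rw [Finset.mem_sort] at hx ⊢
  exact h hx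

/-! ### boolean-lattice alternating sums -/

lemma alt_sum {n : ℕ} (S : Finset (Fin n)) (hS : S ≠ univ) :
    ∑ T ∈ univ.filter (fun T : Finset (Fin n) => S ⊆ T), (-1:ℤ)^(n - T.card) = 0 := by
  have key : ∑ T ∈ univ.filter (fun T : Finset (Fin n) => S ⊆ T), (-1:ℤ)^(n - T.card)
      = ∑ U ∈ Sᶜ.powerset, (-1:ℤ)^U.card := by
    refine Finset.sum_bij' (fun T _ => Tᶜ) (fun U _ => Uᶜ) ?_ ?_ ?_ ?_ ?_
    · intro T hT
      rw [mem_filter] at hT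
      rw [mem_powerset]
      exact compl_subset_compl.2 hT.2
    · intro U hU
      rw [mem_powerset] at hU
      rw [mem_filter]
      exact ⟨mem_univ _, by simpa using compl_subset_compl.2 hU⟩
    · intro T _; exact compl_compl T
    · intro U _; exact compl_compl U
    · intro T _
      rw [card_compl, Fintype.card_fin]
  rw [key]
  apply Finset.sum_powerset_neg_one_pow_card_of_nonempty
  rw [Finset.nonempty_iff_ne_empty]
  intro h
  apply hS
  rw [← compl_compl S, h, Finset.compl_empty]

lemma alt_sum' {n : ℕ} (S : Finset (Fin n)) (hS : S ≠ univ) :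
    ∑ T ∈ univ.filter (fun T : Finset (Fin n) => S ⊂ T ∧ T ≠ univ), (-1:ℤ)^(n - T.card)
      = -1 - (-1:ℤ)^(n - S.card) := by
  have h0 := alt_sum S hS
  have h1 : univ.filter (fun T : Finset (Fin n) => S ⊆ T)
      = insert S (insert univ (univ.filter (fun T : Finset (Fin n) => S ⊂ T ∧ T ≠ univ))) := by
    ext T
    simp only [mem_filter, mem_univ, true_and, mem_insert]
    constructor
    · intro h
      rcases eq_or_ne T S with rfl | hTS
      · exact Or.inl rfl
      · rcases eq_or_ne T univ with rfl | hTu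
        · exact Or.inr (Or.inl rfl)
        · exact Or.inr (Or.inr ⟨lt_of_le_of_ne h (Ne.symm hTS), hTu⟩)
    · rintro (rfl | rfl | ⟨h, _⟩)
      · rfl
      · exact subset_univ _
      · exact h.1
  rw [h1, Finset.sum_insert, Finset.sum_insert] at h0
  · rw [Finset.card_univ, Fintype.card_fin, Nat.sub_self, pow_zero] at h0
    linarith
  · simp
  · simp only [mem_insert, mem_filter, mem_univ, true_and]
    rintro (h | ⟨h, -⟩)
    · exact hS h
    · exact ssubset_irrefl _ h

/-! ### sums over Bd -/

lemma sum_Bd {β M : Type*} [Fintype β] [AddCommMonoid M] (f : Bd β → M) :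
    ∑ x : Bd β, f x = f ⊥ + f ⊤ + ∑ b : β, f ((b : WithTop β) : Bd β) := by
  rw [add_assoc]
  refine (Fintype.sum_option (fun o : Option (WithTop β) => f o)).trans ?_
  congr 1
  exact (Fintype.sum_option (fun o : Option β => f (some o))).trans rfl

/-! ### the interval computation -/

lemma mob_coe_top {A : Type*} (w lam : List A) (S : AstarW w lam) :
    mob ((((S : WithTop (AstarW w lam))) : Bd (AstarW w lam))) ⊤
      = (-1:ℤ)^(w.length - S.1.card) := by
  set n := w.length with hn
  -- strong induction on n - card
  suffices H : ∀ k : ℕ, ∀ S : AstarW w lam, n - S.1.card = k →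
      mob ((((S : WithTop (AstarW w lam))) : Bd (AstarW w lam))) ⊤ = (-1:ℤ)^(n - S.1.card) from
    H _ S rfl
  intro k
  induction k using Nat.strong_induction_on with
  | _ k IH =>
  intro S hSk
  have hScard : S.1.card < n := by
    have := Finset.card_lt_card (lt_of_le_of_ne (Finset.subset_univ S.1) S.2.1)
    simpa [hn] using this
  have hne : (((S : WithTop (AstarW w lam))) : Bd (AstarW w lam)) ≠ ⊤ := by
    simp [WithBot.coe_eq_coe]
  have h0 := mob_sum_left (a := (((S : WithTop (AstarW w lam))) : Bd (AstarW w lam)))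
    (b := (⊤ : Bd (AstarW w lam))) hne
  rw [Finset.sum_filter] at h0
  rw [sum_Bd] at h0
  have hbot : ¬((((S : WithTop (AstarW w lam))) : Bd (AstarW w lam)) ≤ ⊥ ∧ (⊥:Bd (AstarW w lam)) ≤ ⊤) := by
    simp
  rw [if_neg hbot, if_pos ⟨le_top, le_refl _⟩, mob_self] at h0
  simp only [WithBot.coe_le_coe, WithTop.coe_le_coe, le_top, and_true] at h0
  rw [← Finset.sum_filter] at h0
  have hSmem : S ∈ univ.filter (fun T : AstarW w lam => S ≤ T) := by simp
  rw [← Finset.add_sum_erase _ _ hSmem] at h0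
  -- rewrite the erased sum using IH
  have herased : ∑ T ∈ (univ.filter (fun T : AstarW w lam => S ≤ T)).erase S,
      mob ((T : WithTop (AstarW w lam)) : Bd (AstarW w lam)) ⊤
      = ∑ T ∈ (univ.filter (fun T : AstarW w lam => S ≤ T)).erase S, (-1:ℤ)^(n - T.1.card) := by
    refine Finset.sum_congr rfl fun T hT => ?_
    rw [Finset.mem_erase, mem_filter] at hT
    have hlt : S.1 ⊂ T.1 := lt_of_le_of_ne (α := Finset (Fin w.length)) hT.2.2 (fun h => hT.1 (Subtype.ext h).symm)
    have hcard : S.1.card < T.1.card := Finset.card_lt_card hlt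
    exact IH (n - T.1.card) (by omega) T rfl
  rw [herased] at h0
  -- identify the erased sum with the boolean-lattice sum
  have hbool : ∑ T ∈ (univ.filter (fun T : AstarW w lam => S ≤ T)).erase S, (-1:ℤ)^(n - T.1.card)
      = ∑ T ∈ univ.filter (fun T : Finset (Fin w.length) => S.1 ⊂ T ∧ T ≠ univ),
          (-1:ℤ)^(n - T.card) := by
    refine Finset.sum_bij' (fun T _ => T.1)
      (fun T hT => (⟨T, by
        rw [mem_filter] at hT
        exact ⟨hT.2.2, S.2.2.trans (subIdx_mono w hT.2.1.subset)⟩⟩ : AstarW w lam)) ?_ ?_ ?_ ?_ ?_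
    · intro T hT
      rw [Finset.mem_erase, mem_filter] at hT
      rw [mem_filter]
      exact ⟨mem_univ _, lt_of_le_of_ne (α := Finset (Fin w.length)) hT.2.2 (fun h => hT.1 (Subtype.ext h).symm), T.2.1⟩
    · intro T hT
      rw [mem_filter] at hT
      refine Finset.mem_erase.2 ⟨?_, mem_filter.2 ⟨mem_univ _, hT.2.1.subset⟩⟩
      intro h
      exact ssubset_irrefl _ (congrArg Subtype.val h ▸ hT.2.1)
    · intro T _; rfl
    · intro T _; rfl
    · intro T _; rfl
  rw [hbool, alt_sum' S.1 S.2.1] at h0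
  -- now conclude
  have : (0:ℤ) + 1 + (mob ((S : WithTop (AstarW w lam)) : Bd (AstarW w lam)) ⊤ +
    (-1 - (-1:ℤ)^(n - S.1.card))) = 0 := h0
  linarith

lemma mobHat_eq {A : Type*} (w lam : List A) :
    mobHat (AstarW w lam) = -1 - ∑ S ∈ univ.filter
        (fun S : Finset (Fin w.length) => S ≠ univ ∧ lam.Sublist (subIdx w S)),
      (-1:ℤ)^(w.length - S.card) := by
  have hne : (⊥ : Bd (AstarW w lam)) ≠ ⊤ := by
    intro h
    exact WithBot.bot_ne_coe h
  have h0 := mob_sum_left hne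
  rw [Finset.sum_filter, sum_Bd] at h0
  simp only [le_refl, bot_le, le_top, and_self, if_true] at h0
  have hmob : ∀ T : AstarW w lam,
      mob ((T : WithTop (AstarW w lam)) : Bd (AstarW w lam)) ⊤ = (-1:ℤ)^(w.length - T.1.card) :=
    fun T => mob_coe_top w lam T
  rw [mob_self] at h0
  rw [Finset.sum_congr rfl (fun T _ => hmob T)] at h0
  have hsub : ∑ T : AstarW w lam, (-1:ℤ)^(w.length - T.1.card)
      = ∑ S ∈ univ.filter
        (fun S : Finset (Fin w.length) => S ≠ univ ∧ lam.Sublist (subIdx w S)),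
      (-1:ℤ)^(w.length - S.card) := by
    rw [Finset.sum_subtype (p := fun S : Finset (Fin w.length) =>
      S ≠ univ ∧ lam.Sublist (subIdx w S)) _ (fun x => by simp)]
  rw [hsub] at h0
  unfold mobHat
  linarith


/-- For words `u < w` in subword order,
`μ(u,w) = (−1)^{|w|−|u|} E(u,w) + ∑_{u ≤ λ < w} μ(u,λ) · μ(0̂,1̂ in Â*(λ,w))`.
The Möbius function `mu` of subword order is characterised by its defining recurrence. -/
theorem stmt1 {A : Type*} (mu : List A → List A → ℤ)
    (hmu_self : ∀ u : List A, mu u u = 1)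
    (hmu_rec : ∀ u w : List A, u.Sublist w → u ≠ w →
      ∑ c ∈ w.sublists.toFinset.filter (fun c => u.Sublist c), mu u c = 0)
    (u w : List A) (huw : u.Sublist w) (hne : u ≠ w) :
    mu u w = (-1) ^ (w.length - u.length) * (wordE u w : ℤ) +
      ∑ lam ∈ w.sublists.toFinset.filter (fun lam => u.Sublist lam ∧ lam ≠ w),
        mu u lam * mobHat (AstarW w lam) := by
  classical
  have hklt : u.length < w.length := by
    rcases lt_or_eq_of_le huw.length_le with h | h
    · exact h
    · exact absurd (huw.eq_of_length h) hne
  set F := w.sublists.toFinset with hF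
  set s := F.filter (fun lam => u.Sublist lam ∧ lam ≠ w) with hs
  -- Step A : sum of mu over s is -mu u w
  have stepA : ∑ lam ∈ s, mu u lam = - mu u w := by
    have hrec := hmu_rec u w huw hne
    have hwmem : w ∈ F.filter (fun c => u.Sublist c) := by
      simp [hF, List.mem_toFinset, List.mem_sublists, huw]
    rw [← Finset.add_sum_erase _ _ hwmem] at hrec
    have : (F.filter (fun c => u.Sublist c)).erase w = s := by
      ext lam
      simp only [Finset.mem_erase, Finset.mem_filter, hs]
      tauto
    rw [this] at hrec
    linarith
  -- rewrite mobHat via mobHat_eq, expand the product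
  have hexp : ∀ lam ∈ s, mu u lam * mobHat (AstarW w lam)
      = - mu u lam - ∑ S ∈ Finset.univ.filter
          (fun S : Finset (Fin w.length) => S ≠ Finset.univ ∧ lam.Sublist (subIdx w S)),
        mu u lam * (-1:ℤ)^(w.length - S.card) := by
    intro lam _
    rw [mobHat_eq w lam, ← Finset.mul_sum]
    ring
  rw [Finset.sum_congr rfl hexp, Finset.sum_sub_distrib, Finset.sum_neg_distrib]
  rw [stepA, neg_neg]
  -- Step B : the double sum equals (-1)^(n-k) * E
  have stepB : ∑ lam ∈ s, ∑ S ∈ Finset.univ.filter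
        (fun S : Finset (Fin w.length) => S ≠ Finset.univ ∧ lam.Sublist (subIdx w S)),
        mu u lam * (-1:ℤ)^(w.length - S.card)
      = (-1) ^ (w.length - u.length) * (wordE u w : ℤ) := by
    rw [Finset.sum_comm' (t' := Finset.univ.filter
        (fun S : Finset (Fin w.length) => S ≠ Finset.univ))
      (s' := fun S => s.filter (fun lam => lam.Sublist (subIdx w S)))
      (fun lam S => by
        simp only [Finset.mem_filter, Finset.mem_univ, true_and]
        tauto)]
    -- inner sums
    have hinner : ∀ S ∈ Finset.univ.filter
        (fun S : Finset (Fin w.length) => S ≠ Finset.univ),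
        ∑ lam ∈ s.filter (fun lam => lam.Sublist (subIdx w S)),
          mu u lam * (-1:ℤ)^(w.length - S.card)
        = (if subIdx w S = u then 1 else 0) * (-1:ℤ)^(w.length - S.card) := by
      intro S hS
      rw [Finset.mem_filter] at hS
      have hSlt : S.card < w.length := by
        have := Finset.card_lt_card (lt_of_le_of_ne (Finset.subset_univ S) hS.2)
        simpa using this
      set v := subIdx w S with hv
      have hvw : v.Sublist w := subIdx_sublist w S
      have hvlen : v.length = S.card := subIdx_length w S
      rw [← Finset.sum_mul]
      congr 1
      have hset : s.filter (fun lam => lam.Sublist v)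
          = v.sublists.toFinset.filter (fun lam => u.Sublist lam) := by
        ext lam
        simp only [Finset.mem_filter, hs, hF, List.mem_toFinset, List.mem_sublists]
        constructor
        · rintro ⟨⟨-, h2, -⟩, h4⟩
          exact ⟨h4, h2⟩
        · rintro ⟨h1, h2⟩
          refine ⟨⟨h1.trans hvw, h2, ?_⟩, h1⟩
          intro hlw
          have := h1.length_le
          rw [hlw] at this
          omega
      rw [hset]
      by_cases hvu : v = u
      · rw [if_pos hvu]
        have : v.sublists.toFinset.filter (fun lam => u.Sublist lam) = {u} := by
          ext lam
          simp only [Finset.mem_filter, List.mem_toFinset, List.mem_sublists,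
            Finset.mem_singleton]
          constructor
          · rintro ⟨h1, h2⟩
            exact (h2.antisymm (hvu ▸ h1)).symm
          · rintro rfl
            refine ⟨?_, List.Sublist.refl _⟩
            rw [hvu]
        rw [this, Finset.sum_singleton, hmu_self]
      · rw [if_neg hvu]
        by_cases huv : u.Sublist v
        · exact hmu_rec u v huv (fun h => hvu h.symm)
        · apply Finset.sum_eq_zero
          intro lam hlam
          rw [Finset.mem_filter, List.mem_toFinset, List.mem_sublists] at hlam
          exact absurd (hlam.2.trans hlam.1) huv
    rw [Finset.sum_congr rfl hinner]
    -- now collapse the indicator sum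
    have hcollapse : ∀ S ∈ Finset.univ.filter
        (fun S : Finset (Fin w.length) => S ≠ Finset.univ),
        (if subIdx w S = u then (1:ℤ) else 0) * (-1:ℤ)^(w.length - S.card)
          = (if subIdx w S = u then (-1:ℤ)^(w.length - u.length) else 0) := by
      intro S _
      by_cases h : subIdx w S = u
      · rw [if_pos h, if_pos h, one_mul]
        congr 2
        rw [← subIdx_length w S, h]
      · rw [if_neg h, if_neg h, zero_mul]
    rw [Finset.sum_congr rfl hcollapse, ← Finset.sum_filter, Finset.filter_filter]
    have hfilt : Finset.univ.filter
        (fun S : Finset (Fin w.length) => S ≠ Finset.univ ∧ subIdx w S = u)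
        = Finset.univ.filter (fun S : Finset (Fin w.length) => subIdx w S = u) := by
      ext S
      simp only [Finset.mem_filter, Finset.mem_univ, true_and, and_iff_right_iff_imp]
      intro h hu
      have hlen := subIdx_length w S
      rw [h, hu, Finset.card_univ, Fintype.card_fin] at hlen
      omega
    rw [hfilt, Finset.sum_const]
    have : wordE u w = (Finset.univ.filter
        (fun S : Finset (Fin w.length) => subIdx w S = u)).card := rfl
    rw [← this, nsmul_eq_mul, mul_comm]
  rw [stepB]
  ring
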